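/- Let A = ⟨2^(I∪O), Q, q₀, δ, α⟩ be a nondeterministic Büchi word automaton such that every word in (2^(I∪O))^ω has at least one rejecting run of A. Work over the alphabet 2^(I∪O) × Q, identifying a word over it with w⊕r, where w ∈ (2^(I∪O))^ω, r ∈ Q^ω, and the j-th letter of w⊕r is ⟨w_j, r_{j+1}⟩. Let L_ψ = {w⊕r : q₀·r is an accepting run of A on w}. Consider transducers with input alphabet 2^I × Q and output alphabet 2^O: such a transducer T', on input u = (i₀,q¹)·(i₁,q²)·⋯, produces the computation T'(u) whose j-th letter is ⟨i_j ∪ o_j, q^{j+1}⟩, where o_j is the output of T' after reading (i₀,q¹)⋯(i_j,q^{j+1}). Say T' hides L_ψ if for every input word u there exist r⁺, r⁻ ∈ Q^ω such that w_u⊕r⁺ ∈ L_ψ and w_u⊕r⁻ ∉ L_ψ, where w_u is the 2^(I∪O)-component of T'(u). Then L(A) is realizable by an (I/O)-transducer if and only if there exists such a transducer T' that hides L_ψ. -/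

import Mathlib

open Set

/-- Infinite words over alphabet `A`. -/
abbrev Word (A : Type) := ℕ → A

/-- A transducer with input alphabet `Ain` and output alphabet `Aout`. -/
structure Transd (Ain Aout : Type) where
  S : Type
  fintype_S : Fintype S
  s0 : S
  η : S → Ain → S
  τ : S → Aout

def Transd.stateAt {Ain Aout : Type} (T : Transd Ain Aout) (w : Word Ain) : ℕ → T.S
  | 0 => T.η T.s0 (w 0)
  | n + 1 => T.η (T.stateAt w n) (w (n + 1))

def Transd.out {Ain Aout : Type} (T : Transd Ain Aout) (w : Word Ain) (j : ℕ) : Aout :=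
  T.τ (T.stateAt w j)

/-- The computation of an (I/O)-transducer on an input word. -/
def ioComp {I O : Type} (T : Transd (Set I) (Set O)) (wI : Word (Set I)) :
    Word (Set (I ⊕ O)) :=
  fun j => Sum.inl '' wI j ∪ Sum.inr '' T.out wI j

/-- A nondeterministic Büchi word automaton with alphabet `A` and state set `Q`. -/
structure NBW (A Q : Type) where
  q0 : Q
  δ : Q → A → Set Q
  α : Set Q

def NBW.IsRun {A Q : Type} (N : NBW A Q) (r : Word Q) (w : Word A) : Prop :=
  r 0 = N.q0 ∧ ∀ j, r (j + 1) ∈ N.δ (r j) (w j)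

/-- The set of states occurring infinitely often in `r`. -/
def infOcc {Q : Type} (r : Word Q) : Set Q := {q | ∀ N, ∃ n ≥ N, r n = q}

def NBW.lang {A Q : Type} (N : NBW A Q) : Set (Word A) :=
  {w | ∃ r, N.IsRun r w ∧ (infOcc r ∩ N.α).Nonempty}

/-- The sequence `q₀·r` encoded by a word over `A × Q`: the `Q`-component of the
`j`-th letter is the `(j+1)`-st state. -/
def runOf {A Q : Type} (q0 : Q) (v : Word (A × Q)) : Word Q := fun n =>
  match n with
  | 0 => q0
  | j + 1 => (v j).2

/-- The secret `L_ψ = {w⊕r : q₀·r is an accepting run of A on w}`. -/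
def secretLang {I O Q : Type} (A : NBW (Set (I ⊕ O)) Q) :
    Set (Word (Set (I ⊕ O) × Q)) :=
  {v | A.IsRun (runOf A.q0 v) (fun j => (v j).1) ∧
       (infOcc (runOf A.q0 v) ∩ A.α).Nonempty}

/-- The `2^(I∪O)`-component of the computation of a transducer whose input alphabet is
`2^I × Q` and whose output alphabet is `2^O`. -/
def extComp {I O Q : Type} (T' : Transd (Set I × Q) (Set O)) (u : Word (Set I × Q)) :
    Word (Set (I ⊕ O)) :=
  fun j => Sum.inl '' (u j).1 ∪ Sum.inr '' T'.out u j

/-- `L(A)` is realizable iff some transducer with input alphabet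
`2^I × Q` hides the secret `L_ψ`. -/
theorem nbw_realizable_iff_hiding {I O Q : Type} [Fintype I] [Fintype O] [Fintype Q]
    (A : NBW (Set (I ⊕ O)) Q)
    (hrej : ∀ w : Word (Set (I ⊕ O)), ∃ r, A.IsRun r w ∧ ¬(infOcc r ∩ A.α).Nonempty) :
    (∃ T : Transd (Set I) (Set O), ∀ wI, ioComp T wI ∈ A.lang) ↔
    (∃ T' : Transd (Set I × Q) (Set O), ∀ u : Word (Set I × Q),
      ∃ rp rm : Word Q,
        (fun j => (extComp T' u j, rp j)) ∈ secretLang A ∧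
        (fun j => (extComp T' u j, rm j)) ∉ secretLang A) := by
  constructor
  · rintro ⟨T, hT⟩
    refine ⟨⟨T.S, T.fintype_S, T.s0, fun s p => T.η s p.1, T.τ⟩, fun u => ?_⟩
    set T' : Transd (Set I × Q) (Set O) := ⟨T.S, T.fintype_S, T.s0, fun s p => T.η s p.1, T.τ⟩
    have hstate : ∀ n, T'.stateAt u n = T.stateAt (fun j => (u j).1) n := by
      intro n
      induction n with
      | zero => rfl
      | succ n ih => simp [Transd.stateAt, ih]; rfl
    have hcomp : extComp T' u = ioComp T (fun j => (u j).1) := by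
      funext j
      simp [extComp, ioComp, Transd.out, hstate]; rfl
    obtain ⟨r, hrun, hacc⟩ := hT (fun j => (u j).1)
    obtain ⟨r', hrun', hacc'⟩ := hrej (extComp T' u)
    refine ⟨fun j => r (j + 1), fun j => r' (j + 1), ?_, ?_⟩
    · have hro : runOf A.q0 (fun j => (extComp T' u j, r (j + 1))) = r := by
        funext n
        cases n with
        | zero => exact hrun.1.symm
        | succ n => rfl
      refine ⟨?_, ?_⟩
      · rw [hro]
        exact ⟨hrun.1, fun j => by have := hrun.2 j; rw [← hcomp] at this; exact this⟩
      · rw [hro]; exact hacc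
    · intro hmem
      have hro : runOf A.q0 (fun j => (extComp T' u j, r' (j + 1))) = r' := by
        funext n
        cases n with
        | zero => exact hrun'.1.symm
        | succ n => rfl
      exact hacc' (by rw [← hro]; exact hmem.2)
  · rintro ⟨T', hT'⟩
    obtain ⟨r0, -, -⟩ := hrej (fun _ => ∅)
    set q : Q := r0 0
    refine ⟨⟨T'.S, T'.fintype_S, T'.s0, fun s i => T'.η s (i, q), T'.τ⟩, fun wI => ?_⟩
    set T : Transd (Set I) (Set O) := ⟨T'.S, T'.fintype_S, T'.s0, fun s i => T'.η s (i, q), T'.τ⟩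
    set u : Word (Set I × Q) := fun j => (wI j, q) with hu
    have hstate : ∀ n, T.stateAt wI n = T'.stateAt u n := by
      intro n
      induction n with
      | zero => rfl
      | succ n ih => simp [Transd.stateAt, ih]; rfl
    have hcomp : ioComp T wI = extComp T' u := by
      funext j
      simp [extComp, ioComp, Transd.out, hstate]; rfl
    obtain ⟨rp, rm, ⟨hrun, hacc⟩, -⟩ := hT' u
    refine ⟨runOf A.q0 (fun j => (extComp T' u j, rp j)), ⟨hrun.1, ?_⟩, hacc⟩
    intro j
    have := hrun.2 j
    rw [hcomp]
    exact this
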